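/- (Lemma B.3, GMM version of Lemma 3.1) Under the panel GMM setup with groups Ĝ_k, Ĝ_{k'}, matrix θ, and perturbed vector B(φ), assume P_θB̂ ≠ 0 and set ρ := ‖P_θB̂‖₂, c := (θ^⊤θ)^{-1}θ^⊤B̂, and, for fixed i, i' ∈ {1,…,N}, d := v_i w_i^⊤c − v_{i'} w_{i'}^⊤c. Then for every φ ∈ ℝ, ‖β_i(φ) − β_{i'}(φ)‖²_{A_i} = aφ² + bφ + γ, where a = ‖d/ρ‖²_{A_i}, b = (2/ρ)·d^⊤A_i(β̂_i − β̂_{i'} − d), and γ = ‖β̂_i − β̂_{i'} − d‖²_{A_i}. -/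
import Mathlib


open Matrix
open scoped BigOperators

noncomputable section

/-- Euclidean norm of a real vector. -/
def eunorm {n : Type*} [Fintype n] (v : n → ℝ) : ℝ := Real.sqrt (v ⬝ᵥ v)

open scoped Classical in
/-- The direction `a/‖a‖₂` of a vector, with `dir 0 = 0`. -/
def dir {n : Type*} [Fintype n] (v : n → ℝ) : n → ℝ :=
  if v = 0 then 0 else (eunorm v)⁻¹ • v

/-- The `i`-th `p`-block of a stacked vector in `ℝ^{Np}`. -/
def blk {N p : ℕ} (B : Fin N × Fin p → ℝ) (i : Fin N) : Fin p → ℝ := fun a => B (i, a)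

/-- The squared weighted norm `‖u‖²_A = uᵀAu`. -/
def qnorm {p : ℕ} (A : Matrix (Fin p) (Fin p) ℝ) (u : Fin p → ℝ) : ℝ := u ⬝ᵥ (A *ᵥ u)

/-- **Lemma B.3, GMM version of Lemma 3.1.** The squared `A_i`-norm of
the difference of two perturbed blocks is a quadratic polynomial `aφ² + bφ + γ`. -/
theorem gmm_block_difference_is_quadratic_in_phi
    (N T p q K : ℕ) (hN : 0 < N) (hT : 0 < T) (hp : 0 < p) (hq : 0 < q) (hK : 0 < K)
    (x : Fin N → Matrix (Fin T) (Fin p) ℝ) (z : Fin N → Matrix (Fin T) (Fin q) ℝ)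
    (Ω : Fin N → Matrix (Fin q) (Fin q) ℝ) (hΩ : ∀ i, (Ω i)ᵀ = Ω i)
    (y : Fin N → Fin T → ℝ)
    (A : Fin N → Matrix (Fin p) (Fin p) ℝ)
    (hAdef : ∀ i, A i = (x i)ᵀ * z i * Ω i * (z i)ᵀ * x i)
    (hA : ∀ i, IsUnit (A i).det)
    (βhat : Fin N → Fin p → ℝ)
    (hβ : ∀ i, βhat i = (A i)⁻¹ *ᵥ (((x i)ᵀ * z i * Ω i * (z i)ᵀ) *ᵥ y i))
    (Bhat : Fin N × Fin p → ℝ) (hB : ∀ i a, Bhat (i, a) = βhat i a)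
    (ghat : Fin N → Fin K) (k k' : Fin K) (hkk' : k ≠ k')
    (Gk Gk' : Finset (Fin N))
    (hGk : Gk = Finset.univ.filter (fun i => ghat i = k))
    (hGk' : Gk' = Finset.univ.filter (fun i => ghat i = k'))
    (hGkne : Gk.Nonempty) (hGk'ne : Gk'.Nonempty)
    (v : Fin N → ℝ)
    (hv : ∀ i, v i = (if i ∈ Gk then (1 : ℝ) else 0) - (if i ∈ Gk' then 1 else 0))
    (hginv : ∀ c₀ : Fin K, IsUnit (∑ i' ∈ Finset.univ.filter (fun j => ghat j = c₀), A i').det)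
    (w : Fin N → Matrix (Fin p) (Fin p) ℝ)
    (hw : ∀ i, w i = (∑ i' ∈ Finset.univ.filter (fun j => ghat j = ghat i), A i')⁻¹ * A i)
    (θ : Matrix (Fin N × Fin p) (Fin p) ℝ)
    (hθ : ∀ i a b, θ (i, a) b = v i * w i b a)
    (hθθ : IsUnit (θᵀ * θ).det)
    (P : Matrix (Fin N × Fin p) (Fin N × Fin p) ℝ)
    (hP : P = θ * (θᵀ * θ)⁻¹ * θᵀ)
    (hPB : P *ᵥ Bhat ≠ 0)
    (ρ : ℝ) (hρ : ρ = eunorm (P *ᵥ Bhat))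
    (c : Fin p → ℝ) (hc : c = (θᵀ * θ)⁻¹ *ᵥ (θᵀ *ᵥ Bhat))
    (Bφ : ℝ → Fin N × Fin p → ℝ)
    (hBφ : ∀ φ, Bφ φ = φ • dir (P *ᵥ Bhat) + (1 - P) *ᵥ Bhat)
    (i i' : Fin N)
    (d : Fin p → ℝ)
    (hd : d = v i • ((w i)ᵀ *ᵥ c) - v i' • ((w i')ᵀ *ᵥ c))
    (a b γ : ℝ)
    (ha : a = qnorm (A i) (ρ⁻¹ • d))
    (hb : b = (2 / ρ) * (d ⬝ᵥ ((A i) *ᵥ (βhat i - βhat i' - d))))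
    (hγ : γ = qnorm (A i) (βhat i - βhat i' - d)) :
    ∀ φ : ℝ,
      qnorm (A i) (blk (Bφ φ) i - blk (Bφ φ) i') = a * φ ^ 2 + b * φ + γ := by
  intro φ
  -- A i is symmetric
  have hAsym : (A i)ᵀ = A i := by
    rw [hAdef]
    simp [Matrix.transpose_mul, hΩ, Matrix.mul_assoc]
  -- P *ᵥ Bhat = θ *ᵥ c
  have hPBc : P *ᵥ Bhat = θ *ᵥ c := by
    rw [hP, hc, Matrix.mulVec_mulVec, Matrix.mulVec_mulVec]
  -- block of θ *ᵥ c
  have hblk : ∀ j : Fin N, (fun a => (θ *ᵥ c) (j, a)) = v j • ((w j)ᵀ *ᵥ c) := by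
    intro j
    funext a
    simp only [Matrix.mulVec, dotProduct, hθ, Pi.smul_apply, smul_eq_mul,
      Matrix.transpose_apply, Finset.mul_sum]
    exact Finset.sum_congr rfl fun b _ => by ring
  set e : Fin p → ℝ := βhat i - βhat i' - d with he
  have hu : blk (Bφ φ) i - blk (Bφ φ) i' = (φ * ρ⁻¹) • d + e := by
    funext aa
    have hdir : dir (P *ᵥ Bhat) = ρ⁻¹ • (θ *ᵥ c) := by
      rw [dir, if_neg hPB, hρ, hPBc]
    have h1 : ∀ j : Fin N, blk (Bφ φ) j = fun a =>
        φ * (ρ⁻¹ * (θ *ᵥ c) (j, a)) + (Bhat (j, a) - (θ *ᵥ c) (j, a)) := by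
      intro j
      funext a
      show (Bφ φ) (j, a) = _
      rw [hBφ, hdir]
      simp [hPBc, Matrix.sub_mulVec, Matrix.one_mulVec, mul_assoc]
    have hdval : d aa = v i * ((w i)ᵀ *ᵥ c) aa - v i' * ((w i')ᵀ *ᵥ c) aa := by
      rw [hd]; simp
    have hvi : (θ *ᵥ c) (i, aa) = v i * ((w i)ᵀ *ᵥ c) aa := by
      have := congrFun (hblk i) aa; simpa using this
    have hvi' : (θ *ᵥ c) (i', aa) = v i' * ((w i')ᵀ *ᵥ c) aa := by
      have := congrFun (hblk i') aa; simpa using this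
    simp only [Pi.sub_apply, Pi.add_apply, Pi.smul_apply, smul_eq_mul,
      h1, hB, he, hvi, hvi', hdval]
    ring
  -- symmetry of dot products
  have hsymdot : e ⬝ᵥ (A i *ᵥ d) = d ⬝ᵥ (A i *ᵥ e) := by
    rw [Matrix.dotProduct_mulVec, ← Matrix.mulVec_transpose, hAsym,
      dotProduct_comm]
  have hρinv : (2 : ℝ) / ρ = 2 * ρ⁻¹ := by ring
  rw [hu, ha, hb, hγ]
  simp only [qnorm, Matrix.mulVec_add, Matrix.mulVec_smul, dotProduct_add,
    add_dotProduct, dotProduct_smul, smul_dotProduct, smul_eq_mul, hsymdot,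
    hρinv]
  ring


end
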